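/- Let (Z,d) be a compact metric space. Suppose that for each k ∈ ℕ we are given a ball B_k = B(p_k, R_k) ⊆ Z, distinct points x_k^1, x_k^2, x_k^3 in the closed ball B̄(p_k, λ_k R_k) with d(x_k^i, x_k^j) > δ_k R_k for i ≠ j in {1,2,3}, where λ_k, δ_k > 0, and an η-quasi-Möbius homeomorphism g_k:Z→Z such that the points y_k^i := g_k(x_k^i) satisfy d(y_k^i, y_k^j) > δ' for i ≠ j, where η and δ' > 0 are independent of k. If lim_{k→∞} λ_k = 0 and the sequence (R_k) is bounded, then diam(Z \ g_k(B_k)) → 0 as k → ∞. -/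

import Mathlib

open Metric Set MeasureTheory Filter Topology unitInterval
open scoped NNReal ENNReal

noncomputable section

/-- The length (total variation) of a continuous path. -/
def pathLength {Z : Type*} [MetricSpace Z] (γ : C(unitInterval, Z)) : ℝ≥0∞ :=
  eVariationOn γ Set.univ

/-- The (real-valued) arclength function of a path. -/
def pathVar {Z : Type*} [MetricSpace Z] (γ : C(unitInterval, Z)) (t : ℝ) : ℝ :=
  (eVariationOn γ {s : unitInterval | (s : ℝ) ≤ t}).toReal

/-- The arclength (Stieltjes) measure on the parameter interval associated to a path. -/
def lengthMeasure {Z : Type*} [MetricSpace Z] (γ : C(unitInterval, Z)) :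
    MeasureTheory.Measure ℝ :=
  letI := Classical.propDecidable (Monotone (pathVar γ))
  if h : Monotone (pathVar γ) then h.stieltjesFunction.measure else 0

/-- The line integral `∫_γ ρ ds` of a density `ρ` along a path `γ` (with respect to
arclength). -/
def pathIntegral {Z : Type*} [MetricSpace Z] (ρ : Z → ℝ≥0∞) (γ : C(unitInterval, Z)) : ℝ≥0∞ :=
  ∫⁻ t, ρ (γ (Set.projIcc 0 1 zero_le_one t)) ∂(lengthMeasure γ)

/-- A density is admissible for a path family if every rectifiable path in the family has
`ρ`-length at least one. -/
def Admissible {Z : Type*} [MetricSpace Z] (ρ : Z → ℝ≥0∞) (Γ : Set C(unitInterval, Z)) : Prop :=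
  ∀ γ ∈ Γ, pathLength γ < ⊤ → 1 ≤ pathIntegral ρ γ

/-- The `Q`-modulus of a family of paths in `Z`. -/
def modulus {Z : Type*} [MetricSpace Z] [MeasurableSpace Z] (Q : ℝ) (μ : Measure Z)
    (Γ : Set C(unitInterval, Z)) : ℝ≥0∞ :=
  ⨅ (ρ : Z → ℝ≥0∞) (_ : Measurable ρ) (_ : Admissible ρ Γ), ∫⁻ z, ρ z ^ Q ∂μ

/-- A path is nonconstant if it takes at least two values. -/
def Nonconstant {Z : Type*} [MetricSpace Z] (γ : C(unitInterval, Z)) : Prop :=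
  ∃ s t, γ s ≠ γ t

/-- A measure `μ` on a metric space is Ahlfors `Q`-regular. -/
def AhlforsRegular {Z : Type*} [MetricSpace Z] [MeasurableSpace Z] (μ : Measure Z)
    (Q : ℝ) : Prop :=
  ∃ C : ℝ≥0, 1 ≤ C ∧ ∀ (a : Z) (R : ℝ), 0 < R →
    ENNReal.ofReal R ≤ EMetric.diam (Set.univ : Set Z) →
      ENNReal.ofReal (R ^ Q) / C ≤ μ (Metric.ball a R) ∧
      μ (Metric.ball a R) ≤ C * ENNReal.ofReal (R ^ Q)

/-- The metric cross-ratio of a four-tuple of points. -/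
def crossRatio {Z : Type*} [MetricSpace Z] (z₁ z₂ z₃ z₄ : Z) : ℝ≥0 :=
  (nndist z₁ z₃ * nndist z₂ z₄) / (nndist z₁ z₄ * nndist z₂ z₃)

/-- A map is `η`-quasi-Möbius if it distorts cross-ratios of distinct four-tuples in a way
controlled by the homeomorphism `η : [0,∞) → [0,∞)`. -/
def IsQuasiMobius {X Y : Type*} [MetricSpace X] [MetricSpace Y] (η : ℝ≥0 ≃ₜ ℝ≥0)
    (f : X → Y) : Prop :=
  ∀ x₁ x₂ x₃ x₄ : X, x₁ ≠ x₂ → x₁ ≠ x₃ → x₁ ≠ x₄ → x₂ ≠ x₃ → x₂ ≠ x₄ → x₃ ≠ x₄ →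
    crossRatio (f x₁) (f x₂) (f x₃) (f x₄) ≤ η (crossRatio x₁ x₂ x₃ x₄)

/-- A map is `η`-quasisymmetric. -/
def IsQuasisymmetric {X Y : Type*} [MetricSpace X] [MetricSpace Y] (η : ℝ≥0 ≃ₜ ℝ≥0)
    (f : X → Y) : Prop :=
  ∀ x₁ x₂ x₃ : X, x₁ ≠ x₂ → x₁ ≠ x₃ → x₂ ≠ x₃ →
    nndist (f x₁) (f x₂) / nndist (f x₁) (f x₃) ≤ η (nndist x₁ x₂ / nndist x₁ x₃)

/-- A metric space is Ahlfors `Q`-regular (with respect to `Q`-dimensional Hausdorff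
measure). -/
def AhlforsRegularSpace (Y : Type*) [MetricSpace Y] (Q : ℝ) : Prop :=
  letI : MeasurableSpace Y := borel Y
  haveI : BorelSpace Y := ⟨rfl⟩
  AhlforsRegular (μH[Q] : Measure Y) Q

/-- The Ahlfors regular conformal dimension of a metric space: the infimum of the Hausdorff
dimensions of all Ahlfors regular metric spaces quasisymmetrically homeomorphic to it. -/
def arConfDim (Z : Type u) [MetricSpace Z] : ℝ≥0∞ :=
  sInf { D : ℝ≥0∞ | ∃ (Y : Type u) (_ : MetricSpace Y) (Q' : ℝ) (η : ℝ≥0 ≃ₜ ℝ≥0) (f : Z ≃ₜ Y),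
      AhlforsRegularSpace Y Q' ∧ IsQuasisymmetric η f ∧ D = dimH (Set.univ : Set Y) }

/-- The distance between two subsets of a metric space, as an extended real. -/
def setSep {Z : Type*} [MetricSpace Z] (E F : Set Z) : ℝ≥0∞ :=
  ⨅ (x ∈ E) (y ∈ F), edist x y

/-- The relative distance `Δ(E,F) = dist(E,F)/min(diam E, diam F)` of two sets. -/
def relDist {Z : Type*} [MetricSpace Z] (E F : Set Z) : ℝ≥0∞ :=
  setSep E F / min (EMetric.diam E) (EMetric.diam F)

/-- The family of paths joining `E` to `F`. -/
def joinPaths {Z : Type*} [MetricSpace Z] (E F : Set Z) : Set C(unitInterval, Z) :=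
  {γ | γ 0 ∈ E ∧ γ 1 ∈ F}

/-- A metric measure space is `Q`-Loewner if it is connected and the `Q`-modulus of the family
of paths joining two disjoint nondegenerate continua is bounded below by a positive decreasing
function of their relative distance. -/
def IsLoewner (Z : Type*) [MetricSpace Z] [MeasurableSpace Z] (Q : ℝ) (μ : Measure Z) : Prop :=
  ConnectedSpace Z ∧
  ∃ Ψ : ℝ≥0∞ → ℝ≥0∞, Antitone Ψ ∧ (∀ t, t ≠ 0 → t ≠ ⊤ → 0 < Ψ t) ∧
    ∀ E F : Set Z, IsCompact E → IsConnected E → E.Nontrivial →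
      IsCompact F → IsConnected F → F.Nontrivial → Disjoint E F →
      Ψ (relDist E F) ≤ modulus Q μ (joinPaths E F)

/-- A path is thick if every neighborhood of it in `C([0,1],Z)` contains a family of
nonconstant paths of positive `Q`-modulus. -/
def IsThick {Z : Type*} [MetricSpace Z] [MeasurableSpace Z] (Q : ℝ) (μ : Measure Z)
    (γ : C(unitInterval, Z)) : Prop :=
  ∀ ε : ℝ, 0 < ε → 0 < modulus Q μ {α | α ∈ Metric.ball γ ε ∧ Nonconstant α}

end

lemma eta_zero' (η : ℝ≥0 ≃ₜ ℝ≥0) : η 0 = 0 := by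
  by_contra h
  have hpos : 0 < η 0 := pos_iff_ne_zero.mpr h
  have hpc : IsPreconnected (η '' Set.Ioi 0) :=
    isPreconnected_Ioi.image _ η.continuous.continuousOn
  have himg : η '' Set.Ioi 0 = {η 0}ᶜ := by
    ext t
    constructor
    · rintro ⟨s, hs, rfl⟩
      simp only [Set.mem_compl_iff, Set.mem_singleton_iff]
      intro he
      exact (ne_of_gt hs) (η.injective he)
    · intro ht
      refine ⟨η.symm t, ?_, η.apply_symm_apply t⟩
      simp only [Set.mem_Ioi]
      rw [pos_iff_ne_zero]
      intro he
      apply ht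
      simp only [Set.mem_singleton_iff]
      rw [← η.apply_symm_apply t, he]
  rw [himg] at hpc
  obtain ⟨z, hz⟩ := hpc (Set.Iio (η 0)) (Set.Ioi (η 0)) isOpen_Iio isOpen_Ioi
    (fun t ht => (Ne.lt_or_gt (Set.mem_compl_singleton_iff.mp ht)).imp id id)
    ⟨0, by exact ⟨fun hm => hpos.ne' (Set.mem_singleton_iff.mp hm).symm, hpos⟩⟩
    ⟨η 0 + 1, by exact ⟨fun hm => (lt_add_of_pos_right (η 0) one_pos).ne' (Set.mem_singleton_iff.mp hm), lt_add_of_pos_right (η 0) one_pos⟩⟩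
  exact absurd (lt_trans (Set.mem_Iio.mp hz.2.1) (Set.mem_Ioi.mp hz.2.2)) (lt_irrefl _)

lemma exists_pair' {P Q : Fin 3 → Prop}
    (hP : ∀ i j : Fin 3, i ≠ j → P i ∨ P j)
    (hQ : ∀ i j : Fin 3, i ≠ j → Q i ∨ Q j) :
    ∃ i j : Fin 3, i ≠ j ∧ P i ∧ Q j := by
  rcases hP 0 1 (by decide) with h0 | h1
  · rcases hQ 1 2 (by decide) with h | h
    · exact ⟨0, 1, by decide, h0, h⟩
    · exact ⟨0, 2, by decide, h0, h⟩
  · rcases hQ 0 2 (by decide) with h | h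
    · exact ⟨1, 0, by decide, h1, h⟩
    · exact ⟨1, 2, by decide, h1, h⟩

lemma crossRatio_coe {Z : Type*} [MetricSpace Z] (z₁ z₂ z₃ z₄ : Z) :
    ((crossRatio z₁ z₂ z₃ z₄ : ℝ≥0) : ℝ)
      = dist z₁ z₃ * dist z₂ z₄ / (dist z₁ z₄ * dist z₂ z₃) := by
  simp [crossRatio, NNReal.coe_div, NNReal.coe_mul, coe_nndist]

set_option maxHeartbeats 1000000 in
theorem complement_image_ball_diam_tendsto_zero
    {Z : Type*} [MetricSpace Z] [CompactSpace Z]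
    (p : ℕ → Z) (R lam δ : ℕ → ℝ) (x : ℕ → Fin 3 → Z) (g : ℕ → (Z ≃ₜ Z))
    (η : ℝ≥0 ≃ₜ ℝ≥0) (δ' : ℝ) (hδ' : 0 < δ')
    (hR : ∀ k, 0 < R k) (hlam : ∀ k, 0 < lam k) (hδ : ∀ k, 0 < δ k)
    (hx : ∀ k i, x k i ∈ Metric.closedBall (p k) (lam k * R k))
    (hxsep : ∀ k, ∀ i j : Fin 3, i ≠ j → δ k * R k < dist (x k i) (x k j))
    (hqm : ∀ k, IsQuasiMobius η (g k))
    (hysep : ∀ k, ∀ i j : Fin 3, i ≠ j → δ' < dist (g k (x k i)) (g k (x k j)))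
    (hlam0 : Filter.Tendsto lam Filter.atTop (nhds 0))
    (hRbdd : ∃ M : ℝ, ∀ k, R k ≤ M)
    : Filter.Tendsto
        (fun k => Metric.diam (Set.univ \ (g k) '' Metric.ball (p k) (R k)))
        Filter.atTop (nhds 0) := by
  classical
  have hbd : Bornology.IsBounded (Set.univ : Set Z) := isCompact_univ.isBounded
  set D : ℝ := Metric.diam (Set.univ : Set Z) with hD
  have hdistD : ∀ a b : Z, dist a b ≤ D :=
    fun a b => Metric.dist_le_diam_of_mem hbd trivial trivial
  have hDpos : 0 < D := by
    have h01 := hysep 0 0 1 (by decide)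
    have := hdistD (g 0 (x 0 0)) (g 0 (x 0 1))
    linarith
  set C : ℝ := D * D / δ' with hC
  have hCpos : 0 < C := by positivity
  rw [Metric.tendsto_atTop]
  intro ε hε
  set ε' : ℝ≥0 := Real.toNNReal (ε / (2 * C)) with hε'
  have hε'coe : (ε' : ℝ) = ε / (2 * C) := Real.coe_toNNReal _ (by positivity)
  have hε'pos : 0 < ε' := Real.toNNReal_pos.2 (by positivity)
  have hCε' : C * (ε' : ℝ) < ε := by
    rw [hε'coe]
    rw [show C * (ε / (2 * C)) = ε / 2 by field_simp]
    linarith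
  -- continuity of η at 0
  have hη0 : η 0 = 0 := eta_zero' η
  have hcont : ∀ᶠ t in 𝓝 (0 : ℝ≥0), η t < ε' := by
    have h2 : Filter.Tendsto η (𝓝 0) (𝓝 0) := by
      have := η.continuous.tendsto (0 : ℝ≥0)
      rwa [hη0] at this
    exact h2.eventually_lt_const hε'pos
  obtain ⟨θ, θpos, hθ⟩ := NNReal.nhds_zero_basis.mem_iff.mp hcont
  -- eventual smallness of lam
  have hm : (0:ℝ) < min ((θ : ℝ) / 16) (1 / 2) := by
    have : (0:ℝ) < (θ : ℝ) := θpos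
    positivity
  obtain ⟨N, hN⟩ := Filter.eventually_atTop.mp (hlam0.eventually_lt_const hm)
  refine ⟨N, fun k hk => ?_⟩
  have hk1 : lam k < 1 / 2 := lt_of_lt_of_le (hN k hk) (min_le_right _ _)
  have hk2 : 16 * lam k < (θ : ℝ) := by
    have := lt_of_lt_of_le (hN k hk) (min_le_left _ _)
    linarith
  rw [Real.dist_0_eq_abs, abs_of_nonneg Metric.diam_nonneg]
  have hmain : ∀ z ∈ Set.univ \ (g k) '' Metric.ball (p k) (R k),
      ∀ w ∈ Set.univ \ (g k) '' Metric.ball (p k) (R k),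
      dist z w ≤ C * (ε' : ℝ) := by
    intro z hz w hw
    obtain ⟨-, hz2⟩ := hz
    obtain ⟨-, hw2⟩ := hw
    set u := (g k).symm z with hu
    set v := (g k).symm w with hv
    have hgu : g k u = z := (g k).apply_symm_apply z
    have hgv : g k v = w := (g k).apply_symm_apply w
    have huB : R k ≤ dist u (p k) := by
      by_contra hcon; push_neg at hcon
      exact hz2 ⟨u, Metric.mem_ball.2 hcon, hgu⟩
    have hvB : R k ≤ dist v (p k) := by
      by_contra hcon; push_neg at hcon
      exact hw2 ⟨v, Metric.mem_ball.2 hcon, hgv⟩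
    by_cases huv : u = v
    · have hzw : z = w := by rw [← hgu, ← hgv, huv]
      rw [hzw, dist_self]
      positivity
    -- points far from the center are far from each xᵢ
    have hfar : ∀ a : Z, R k ≤ dist a (p k) → ∀ i, R k / 2 ≤ dist a (x k i) := by
      intro a ha i
      have h1 : dist (x k i) (p k) ≤ lam k * R k := hx k i
      have h2 : dist a (p k) ≤ dist a (x k i) + dist (x k i) (p k) := dist_triangle _ _ _
      have hRk := hR k
      nlinarith [hlam k]
    have hAu : ∀ i, R k / 2 ≤ dist u (x k i) := hfar u huB
    have hAv : ∀ i, R k / 2 ≤ dist v (x k i) := hfar v hvB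
    have hRk := hR k
    have hnux : ∀ i, u ≠ x k i := by
      intro i hcon
      have := hAu i
      rw [hcon, dist_self] at this
      linarith
    have hnvx : ∀ i, v ≠ x k i := by
      intro i hcon
      have := hAv i
      rw [hcon, dist_self] at this
      linarith
    -- choose good indices
    obtain ⟨i, j, hij, hiP, hjQ⟩ := exists_pair'
      (P := fun i => δ' / 2 ≤ dist z (g k (x k i)))
      (Q := fun j => δ' / 2 ≤ dist w (g k (x k j)))
      (by
        intro i j hij'
        by_contra hcon; push_neg at hcon
        obtain ⟨h1, h2⟩ := hcon
        have h3 := hysep k i j hij'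
        have tri := dist_triangle (g k (x k i)) z (g k (x k j))
        rw [dist_comm (g k (x k i)) z] at tri
        linarith)
      (by
        intro i j hij'
        by_contra hcon; push_neg at hcon
        obtain ⟨h1, h2⟩ := hcon
        have h3 := hysep k i j hij'
        have tri := dist_triangle (g k (x k i)) w (g k (x k j))
        rw [dist_comm (g k (x k i)) w] at tri
        linarith)
    have hxji : x k j ≠ x k i := by
      have := hxsep k j i (Ne.symm hij)
      have hpos : 0 < dist (x k j) (x k i) := by nlinarith [hδ k]
      exact dist_pos.mp hpos
    -- apply quasi-Möbius
    have hQM := hqm k u (x k j) v (x k i) (hnux j) huv (hnux i)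
      (Ne.symm (hnvx j)) hxji (hnvx i)
    rw [hgu, hgv] at hQM
    -- bound the upstream cross-ratio
    have hup : crossRatio u (x k j) v (x k i) < θ := by
      rw [← NNReal.coe_lt_coe, crossRatio_coe]
      set A := dist u (x k i) with hA
      set B := dist (x k j) v with hB
      have hA2 : R k / 2 ≤ A := hAu i
      have hB2 : R k / 2 ≤ B := by rw [hB, dist_comm]; exact hAv j
      have hApos : 0 < A := by linarith
      have hBpos : 0 < B := by linarith
      set s := dist (x k j) (x k i) with hs
      have hs2 : s ≤ 2 * lam k * R k := by
        have h1 : dist (x k j) (p k) ≤ lam k * R k := hx k j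
        have h2 : dist (x k i) (p k) ≤ lam k * R k := hx k i
        have tri := dist_triangle (x k j) (p k) (x k i)
        rw [dist_comm (p k) (x k i)] at tri
        linarith
      set t := dist u v with ht
      have ht2 : t ≤ A + s + B := by
        have tri1 := dist_triangle u (x k i) v
        have tri2 := dist_triangle (x k i) (x k j) v
        rw [dist_comm (x k i) (x k j)] at tri2
        rw [dist_comm (x k j) v] at hB
        linarith
      have hgoal : t * s / (A * B) ≤ 16 * lam k := by
        rw [div_le_iff₀ (by positivity)]
        have hsnn : 0 ≤ s := dist_nonneg
        have htnn : 0 ≤ t := dist_nonneg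
        have hlamk := hlam k
        have hR2A : R k ≤ 2 * A := by linarith
        have hR2B : R k ≤ 2 * B := by linarith
        have hstep1 : A * s ≤ 4 * lam k * (A * B) := by
          nlinarith [mul_le_mul_of_nonneg_left hs2 hApos.le,
            mul_le_mul_of_nonneg_left hR2B (by positivity : (0:ℝ) ≤ 2 * lam k * A)]
        have hstep2 : B * s ≤ 4 * lam k * (A * B) := by
          nlinarith [mul_le_mul_of_nonneg_left hs2 hBpos.le,
            mul_le_mul_of_nonneg_left hR2A (by positivity : (0:ℝ) ≤ 2 * lam k * B)]
        have h2A : 2 * lam k * R k ≤ 4 * lam k * A := by nlinarith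
        have h2B : 2 * lam k * R k ≤ 4 * lam k * B := by nlinarith
        have hstep3 : s * s ≤ 8 * lam k * (A * B) := by
          nlinarith [mul_le_mul hs2 hs2 hsnn (by positivity : (0:ℝ) ≤ 2 * lam k * R k),
            mul_le_mul h2A h2B (by positivity) (by positivity),
            mul_le_mul_of_nonneg_right hk1.le
              (by positivity : (0:ℝ) ≤ 16 * lam k * (A * B))]
        have hts : t * s ≤ (A + s + B) * s := mul_le_mul_of_nonneg_right ht2 hsnn
        have hexp : (A + s + B) * s = A * s + s * s + B * s := by ring
        linarith
      calc t * s / (A * B) ≤ 16 * lam k := hgoal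
        _ < (θ : ℝ) := hk2
    have hηsmall : η (crossRatio u (x k j) v (x k i)) < ε' := hθ hup
    have hCRd : crossRatio z (g k (x k j)) w (g k (x k i)) < ε' :=
      lt_of_le_of_lt hQM hηsmall
    -- downstream estimate
    rw [← NNReal.coe_lt_coe, crossRatio_coe] at hCRd
    set a := dist (g k (x k j)) (g k (x k i)) with ha
    set b := dist z (g k (x k i)) with hb
    set c := dist (g k (x k j)) w with hc
    have haδ : δ' < a := hysep k j i (Ne.symm hij)
    have hbδ : δ' / 2 ≤ b := hiP
    have hcδ : δ' / 2 ≤ c := by rw [hc, dist_comm]; exact hjQ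
    have hbD : b ≤ D := hdistD _ _
    have hcD : c ≤ D := hdistD _ _
    have hbpos : 0 < b := by linarith
    have hcpos : 0 < c := by linarith
    have hkey : dist z w * a < (ε' : ℝ) * (b * c) := by
      rw [← div_lt_iff₀ (by positivity)]
      exact hCRd
    have hzwnn : 0 ≤ dist z w := dist_nonneg
    have hε'nn : (0:ℝ) ≤ (ε' : ℝ) := ε'.coe_nonneg
    rw [hC, div_mul_eq_mul_div, le_div_iff₀ hδ']
    nlinarith [mul_le_mul_of_nonneg_left haδ.le hzwnn,
      mul_le_mul_of_nonneg_right (mul_le_mul_of_nonneg_left hbD hε'nn) hcpos.le,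
      mul_le_mul_of_nonneg_left hcD (by positivity : (0:ℝ) ≤ (ε' : ℝ) * D)]
  calc Metric.diam (Set.univ \ (g k) '' Metric.ball (p k) (R k))
      ≤ C * (ε' : ℝ) := Metric.diam_le_of_forall_dist_le (by positivity) hmain
    _ < ε := hCε'
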